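/- For a solution of ẍ + κẋ = 0 with initial data (x₀, ẋ₀), the quantity H(t) = ½ ẋ(t)² - ½ κ² x(t)² + κ² Λ x(t) (the Hamiltonian of the associated conservative system with Lagrangian L̂ = ½ẋ² + ½κ²x² - κ²Λx) is constant in time. -/

import Mathlib

theorem stmt_3 (κ x₀ v₀ : ℝ) (hκ : κ ≠ 0) (x : ℝ → ℝ)
    (hx : Differentiable ℝ x) (hx' : Differentiable ℝ (deriv x))
    (hode : ∀ t, deriv (deriv x) t + κ * deriv x t = 0)
    (h0 : x 0 = x₀) (h0' : deriv x 0 = v₀) :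
    ∀ t,
      (1 / 2) * (deriv x t) ^ 2 - (1 / 2) * κ ^ 2 * (x t) ^ 2
          + κ ^ 2 * (x₀ + v₀ / κ) * x t
        = (1 / 2) * (deriv x 0) ^ 2 - (1 / 2) * κ ^ 2 * (x 0) ^ 2
          + κ ^ 2 * (x₀ + v₀ / κ) * x 0 := by
  set Λ : ℝ := x₀ + v₀ / κ with hΛ
  -- first integral: deriv x + κ * x is constant
  have hv : ∀ t, deriv x t + κ * x t = v₀ + κ * x₀ := by
    have hc : ∀ t, deriv (fun t => deriv x t + κ * x t) t = 0 := by
      intro t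
      have h1 : HasDerivAt (fun t => deriv x t + κ * x t)
          (deriv (deriv x) t + κ * deriv x t) t :=
        (hx' t).hasDerivAt.add ((hx t).hasDerivAt.const_mul κ)
      rw [h1.deriv, hode t]
    intro t
    have h := is_const_of_deriv_eq_zero (f := fun t => deriv x t + κ * x t)
      (hx'.add (hx.const_mul κ)) hc t 0
    rw [h, h0, h0']
  set g : ℝ → ℝ := fun s =>
    (1 / 2) * (deriv x s) ^ 2 - (1 / 2) * κ ^ 2 * (x s) ^ 2 + κ ^ 2 * Λ * x s with hg
  have hgd : Differentiable ℝ g :=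
    (((hx'.pow 2).const_mul _).sub ((hx.pow 2).const_mul _)).add (hx.const_mul _)
  have hderiv : ∀ s, deriv g s = 0 := by
    intro s
    have hd : HasDerivAt g
        ((1 / 2) * ((2 : ℕ) * (deriv x s) ^ 1 * deriv (deriv x) s)
          - (1 / 2) * κ ^ 2 * ((2 : ℕ) * (x s) ^ 1 * deriv x s)
          + κ ^ 2 * Λ * deriv x s) s :=
      ((((hx' s).hasDerivAt.pow 2).const_mul ((1 : ℝ) / 2)).sub
        (((hx s).hasDerivAt.pow 2).const_mul ((1 / 2) * κ ^ 2))).add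
        ((hx s).hasDerivAt.const_mul (κ ^ 2 * Λ))
    rw [hd.deriv]
    have h1 : deriv (deriv x) s = -κ * deriv x s := by have := hode s; linarith
    have h2 : deriv x s = v₀ + κ * x₀ - κ * x s := by have := hv s; linarith
    have h3 : κ ^ 2 * Λ = κ * (v₀ + κ * x₀) := by
      rw [hΛ]; field_simp; ring
    rw [h1, h2, h3]; push_cast; ring
  intro t
  have h := is_const_of_deriv_eq_zero hgd hderiv t 0
  simpa [hg] using h
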